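/- For all m ≥ 2, ∑_{k=0}^{m} k!·C(m-1,k-1) = m·S(m-1) - (m-1)·S(m-2), where S(m) = ∑_{k=0}^{m} k!·C(m,k) and C(n,-1) = 0. -/

import Mathlib

def S (m : ℕ) : ℕ := ∑ k ∈ Finset.range (m + 1), (Nat.factorial k) * Nat.choose m k

def T (n : ℕ) : ℕ := ∑ j ∈ Finset.range (n + 1), Nat.factorial (j+1) * Nat.choose n j

lemma lem1 (n : ℕ) : S (n+1) = S n + T n := by
  have h1 : ∀ i, Nat.factorial (i+1) * Nat.choose (n+1) (i+1)
      = Nat.factorial (i+1) * Nat.choose n i + Nat.factorial (i+1) * Nat.choose n (i+1) := by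
    intro i; rw [Nat.choose_succ_succ, Nat.mul_add]
  have e1 : S (n+1) = (∑ i ∈ Finset.range (n+1), Nat.factorial (i+1) * Nat.choose (n+1) (i+1)) + 1 := by
    unfold S
    rw [Finset.sum_range_succ' _ (n+1)]
    simp
  have e2 : (∑ i ∈ Finset.range (n+1), Nat.factorial (i+1) * Nat.choose n (i+1))
      = ∑ i ∈ Finset.range n, Nat.factorial (i+1) * Nat.choose n (i+1) := by
    rw [Finset.sum_range_succ]
    simp
  have e3 : S n = (∑ i ∈ Finset.range n, Nat.factorial (i+1) * Nat.choose n (i+1)) + 1 := by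
    unfold S
    rw [Finset.sum_range_succ' _ n]
    simp
  rw [e1]
  simp only [h1, Finset.sum_add_distrib, e2]
  unfold T
  omega

lemma lem2 (n : ℕ) : T (n+1) = S (n+1) + (n+1) * T n := by
  have h1 : ∀ j, Nat.factorial (j+1) * Nat.choose (n+1) j
      = Nat.factorial j * Nat.choose (n+1) j + j * (Nat.factorial j * Nat.choose (n+1) j) := by
    intro j; rw [Nat.factorial_succ]; ring
  have e2 : (∑ j ∈ Finset.range (n+2), j * (Nat.factorial j * Nat.choose (n+1) j))
      = (n+1) * T n := by
    rw [Finset.sum_range_succ' _ (n+1)]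
    have h2 : ∀ i, (i+1) * (Nat.factorial (i+1) * Nat.choose (n+1) (i+1))
        = (n+1) * (Nat.factorial (i+1) * Nat.choose n i) := by
      intro i
      have key : (n+1).choose (i+1) * (i+1) = (n+1) * n.choose i :=
        (Nat.add_one_mul_choose_eq n i).symm
      calc (i+1) * (Nat.factorial (i+1) * Nat.choose (n+1) (i+1))
          = Nat.factorial (i+1) * ((n+1).choose (i+1) * (i+1)) := by ring
        _ = Nat.factorial (i+1) * ((n+1) * n.choose i) := by rw [key]
        _ = (n+1) * (Nat.factorial (i+1) * Nat.choose n i) := by ring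
    simp only [h2, Nat.zero_mul, Nat.add_zero]
    rw [← Finset.mul_sum]
    rfl
  unfold T S
  simp only [h1, Finset.sum_add_distrib]
  rw [show n+1+1 = n+2 from rfl, e2]
  rfl

lemma lemB (n : ℕ) : T n = n * S n + 1 := by
  induction n with
  | zero => simp [T, S]
  | succ n ih =>
    rw [lem2, lem1, ih]
    ring

theorem shifted_sum : ∀ m : ℕ, 2 ≤ m →
    (∑ k ∈ Finset.range (m + 1),
        ((Nat.factorial k) : ℤ) * (if k = 0 then 0 else Nat.choose (m - 1) (k - 1))) =
      (m : ℤ) * S (m - 1) - ((m : ℤ) - 1) * S (m - 2) := by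
  intro m hm
  obtain ⟨n, rfl⟩ : ∃ n, m = n + 2 := ⟨m - 2, by omega⟩
  have hL : (∑ k ∈ Finset.range (n + 2 + 1),
        ((Nat.factorial k) : ℤ) * (if k = 0 then 0 else Nat.choose (n + 2 - 1) (k - 1)))
      = (T (n+1) : ℤ) := by
    rw [Finset.sum_range_succ']
    unfold T
    push_cast
    simp
  rw [hL]
  have h2 : n + 2 - 1 = n + 1 := by omega
  have h3 : n + 2 - 2 = n := by omega
  rw [h2, h3]
  have hB := lemB (n+1)
  have hA : S (n+1) = (n+1) * S n + 1 := by rw [lem1, lemB]; ring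
  push_cast [hB, hA]
  ring
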